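/- For all indices i, j with κ_i > 0 and κ_j > 0, the functions f_i belong to L²(μ) and satisfy ∫_𝒳 f_i(x) f_j(x) dμ(x) = δ_{ij}; moreover each such f_i is an eigenfunction of the integral operator of k^Z: ∫_𝒳 k^Z(x,y) f_i(y) dμ(y) = κ_i f_i(x) for μ-almost every x ∈ 𝒳. -/

import Mathlib

open scoped BigOperators
open Matrix MeasureTheory

/-- `B` is the Moore–Penrose pseudo-inverse of `A`. -/
def IsMoorePenrose {m n : Type*} [Fintype m] [Fintype n]
    (A : Matrix m n ℝ) (B : Matrix n m ℝ) : Prop :=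
  A * B * A = A ∧ B * A * B = B ∧ (A * B)ᵀ = A * B ∧ (B * A)ᵀ = B * A

/-- `k` is a (symmetric) positive definite kernel. -/
def IsPosDefKernel {𝒳 : Type*} (k : 𝒳 → 𝒳 → ℝ) : Prop :=
  (∀ x y, k x y = k y x) ∧
  ∀ (n : ℕ) (x : Fin n → 𝒳) (c : Fin n → ℝ),
    0 ≤ ∑ a, ∑ b, c a * c b * k (x a) (x b)

lemma aux_int_mul {𝒳 : Type*} [MeasurableSpace 𝒳] {μ : Measure 𝒳} {f g : 𝒳 → ℝ}
    (hf : MemLp f 2 μ) (hg : MemLp g 2 μ) : Integrable (fun x => f x * g x) μ := by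
  refine (hf.integrable_sq.add hg.integrable_sq).mono'
    (hf.aestronglyMeasurable.mul hg.aestronglyMeasurable) (Filter.Eventually.of_forall fun x => ?_)
  simp only [Real.norm_eq_abs, abs_mul, Pi.add_apply]
  nlinarith [sq_nonneg (|f x| - |g x|), sq_abs (f x), sq_abs (g x), abs_nonneg (f x),
    abs_nonneg (g x)]

lemma aux_memlp {𝒳 : Type*} [MeasurableSpace 𝒳] {μ : Measure 𝒳} {ℓ : ℕ} {k : 𝒳 → 𝒳 → ℝ}
    {Z : Fin ℓ → 𝒳} (hL2 : ∀ a, MemLp (fun x => k (Z a) x) 2 μ) (c : Fin ℓ → ℝ) :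
    MemLp (fun x => ∑ a, c a * k (Z a) x) 2 μ :=
  memLp_finset_sum _ fun a _ => (hL2 a).const_mul (c a)

lemma aux_key_int {𝒳 : Type*} [MeasurableSpace 𝒳] {μ : Measure 𝒳} {ℓ : ℕ} {k : 𝒳 → 𝒳 → ℝ}
    {Z : Fin ℓ → 𝒳} (hint : ∀ a b, Integrable (fun x => k (Z a) x * k (Z b) x) μ)
    {hmu : Matrix (Fin ℓ) (Fin ℓ) ℝ}
    (hhmu : ∀ a b, hmu a b = ∫ x, k (Z a) x * k (Z b) x ∂μ) (c d : Fin ℓ → ℝ) :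
    ∫ x, (∑ a, c a * k (Z a) x) * (∑ b, d b * k (Z b) x) ∂μ = c ⬝ᵥ hmu *ᵥ d := by
  have h1 : ∀ x : 𝒳, (∑ a, c a * k (Z a) x) * (∑ b, d b * k (Z b) x)
      = ∑ a, ∑ b, (c a * d b) * (k (Z a) x * k (Z b) x) := by
    intro x
    rw [Finset.sum_mul_sum]
    exact Finset.sum_congr rfl fun a _ => Finset.sum_congr rfl fun b _ => by ring
  simp_rw [h1]
  rw [integral_finset_sum _ fun a _ => integrable_finset_sum _ fun b _ => ((hint a b).const_mul _)]
  have h2 : ∀ a : Fin ℓ, ∫ x, ∑ b, (c a * d b) * (k (Z a) x * k (Z b) x) ∂μ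
      = ∑ b, (c a * d b) * hmu a b := by
    intro a
    rw [integral_finset_sum _ fun b _ => ((hint a b).const_mul _)]
    exact Finset.sum_congr rfl fun b _ => by rw [MeasureTheory.integral_const_mul, hhmu]
  rw [Finset.sum_congr rfl fun a _ => h2 a]
  simp only [dotProduct, mulVec, Finset.mul_sum]
  exact Finset.sum_congr rfl fun a _ => Finset.sum_congr rfl fun b _ => by ring

theorem stmt9
    {𝒳 : Type*} [MeasurableSpace 𝒳] (μ : Measure 𝒳) [IsProbabilityMeasure μ]
    (k : 𝒳 → 𝒳 → ℝ) (hpd : IsPosDefKernel k)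
    (ℓ : ℕ) (Z : Fin ℓ → 𝒳)
    (hL2 : ∀ a, MemLp (fun x => k (Z a) x) 2 μ)
    (G : Matrix (Fin ℓ) (Fin ℓ) ℝ) (hG : ∀ a b, G a b = k (Z a) (Z b))
    (Kp : Matrix (Fin ℓ) (Fin ℓ) ℝ) (hKp : IsMoorePenrose G Kp)
    (kZ : 𝒳 → 𝒳 → ℝ)
    (hkZ : ∀ x y, kZ x y = ∑ a, ∑ b, k x (Z a) * Kp a b * k (Z b) y)
    (hmu : Matrix (Fin ℓ) (Fin ℓ) ℝ)
    (hhmu : ∀ a b, hmu a b = ∫ x, k (Z a) x * k x (Z b) ∂μ)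
    (Hm : Matrix (Fin ℓ) (Fin ℓ) ℝ) (hHm : Hmᵀ * Hm = hmu)
    (Hp : Matrix (Fin ℓ) (Fin ℓ) ℝ) (hHp : IsMoorePenrose Hm Hp)
    (V : Matrix (Fin ℓ) (Fin ℓ) ℝ) (hV : Vᵀ * V = 1)
    (κ : Fin ℓ → ℝ)
    (hκmono : ∀ i j : Fin ℓ, i ≤ j → κ j ≤ κ i) (hκ0 : ∀ i, 0 ≤ κ i)
    (hVdecomp : Hm * Kp * Hmᵀ = V * Matrix.diagonal κ * Vᵀ)
    (f : Fin ℓ → 𝒳 → ℝ)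
    (hf : ∀ i x, f i x = ∑ a, Hp.mulVec (fun b => V b i) a * k (Z a) x) :
    (∀ i : Fin ℓ, 0 < κ i → MemLp (f i) 2 μ) ∧
    (∀ i j : Fin ℓ, 0 < κ i → 0 < κ j →
      (∫ x, f i x * f j x ∂μ) = if i = j then 1 else 0) ∧
    (∀ i : Fin ℓ, 0 < κ i →
      ∀ᵐ x ∂μ, (∫ y, kZ x y * f i y ∂μ) = κ i * f i x) := by
  obtain ⟨ksymm, -⟩ := hpd
  have hint : ∀ a b, Integrable (fun x => k (Z a) x * k (Z b) x) μ :=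
    fun a b => aux_int_mul (hL2 a) (hL2 b)
  have hhmu' : ∀ a b, hmu a b = ∫ x, k (Z a) x * k (Z b) x ∂μ := by
    intro a b
    rw [hhmu]
    congr 1
    funext x
    rw [ksymm x (Z b)]
  -- eigen-equation for columns of V
  have hκv : ∀ i, (Hm * Kp * Hmᵀ) *ᵥ (fun b => V b i) = κ i • (fun b => V b i) := by
    intro i
    have hveq : V *ᵥ Pi.single i 1 = (fun b => V b i) := by
      rw [Matrix.mulVec_single_one]; rfl
    calc (Hm * Kp * Hmᵀ) *ᵥ (fun b => V b i)
        = (V * Matrix.diagonal κ * Vᵀ) *ᵥ (V *ᵥ Pi.single i 1) := by rw [hVdecomp, hveq]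
      _ = ((V * Matrix.diagonal κ) * (Vᵀ * V)) *ᵥ Pi.single i 1 := by
          rw [Matrix.mulVec_mulVec, Matrix.mul_assoc]
      _ = (V * Matrix.diagonal κ) *ᵥ Pi.single i 1 := by rw [hV, Matrix.mul_one]
      _ = V *ᵥ (Matrix.diagonal κ *ᵥ Pi.single i 1) := by rw [Matrix.mulVec_mulVec]
      _ = V *ᵥ Pi.single i (κ i) := by rw [Matrix.diagonal_mulVec_single, mul_one]
      _ = κ i • (fun b => V b i) := by
          rw [Matrix.mulVec_single]
          funext b
          simp [mul_comm]
  -- columns of V with positive eigenvalue are fixed by Hm * Hp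
  have hproj : ∀ i, 0 < κ i → (Hm * Hp) *ᵥ (fun b => V b i) = (fun b => V b i) := by
    intro i hi
    have h1 : (Hm * Hp) *ᵥ ((Hm * Kp * Hmᵀ) *ᵥ (fun b => V b i))
        = (Hm * Kp * Hmᵀ) *ᵥ (fun b => V b i) := by
      rw [Matrix.mulVec_mulVec]
      congr 1
      rw [← Matrix.mul_assoc, ← Matrix.mul_assoc, hHp.1]
    rw [hκv i, Matrix.mulVec_smul] at h1
    exact smul_right_injective (Fin ℓ → ℝ) (ne_of_gt hi) h1
  have hmuHp : hmu * Hp = Hmᵀ := by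
    rw [← hHm]
    calc Hmᵀ * Hm * Hp = Hmᵀ * (Hm * Hp) := Matrix.mul_assoc _ _ _
      _ = Hmᵀ * (Hm * Hp)ᵀ := by rw [hHp.2.2.1]
      _ = ((Hm * Hp) * Hm)ᵀ := (Matrix.transpose_mul _ _).symm
      _ = Hmᵀ := by rw [hHp.1]
  -- orthonormality in matrix form
  have hdotv : ∀ i j : Fin ℓ, 0 < κ i → 0 < κ j →
      (Hp *ᵥ (fun b => V b i)) ⬝ᵥ hmu *ᵥ (Hp *ᵥ (fun b => V b j))
        = if i = j then 1 else 0 := by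
    intro i j hi hj
    have h1 : hmu *ᵥ (Hp *ᵥ (fun b => V b j)) = Hmᵀ *ᵥ (fun b => V b j) := by
      rw [Matrix.mulVec_mulVec, hmuHp]
    rw [h1, Matrix.dotProduct_mulVec, Matrix.vecMul_transpose, Matrix.mulVec_mulVec,
      hproj i hi]
    have h2 : (fun b => V b i) ⬝ᵥ (fun b => V b j) = (Vᵀ * V) i j := by
      simp [dotProduct, Matrix.mul_apply, Matrix.transpose_apply]
    rw [h2, hV, Matrix.one_apply]
  refine ⟨?_, ?_, ?_⟩
  · intro i _
    have hfi : f i = fun x => ∑ a, (Hp *ᵥ (fun b => V b i)) a * k (Z a) x := funext (hf i)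
    rw [hfi]
    exact aux_memlp hL2 _
  · intro i j hi hj
    simp only [hf]
    rw [aux_key_int hint hhmu']
    exact hdotv i j hi hj
  · intro i hi
    set w : Fin ℓ → ℝ := Hp *ᵥ (fun b => V b i) with hw
    set u : Fin ℓ → ℝ := (Kp * hmu) *ᵥ w with hu
    set d : Fin ℓ → ℝ := u - κ i • w with hd
    have hHmw : Hm *ᵥ w = (fun b => V b i) := by
      rw [hw, Matrix.mulVec_mulVec]
      exact hproj i hi
    have hHmu' : Hm *ᵥ u = κ i • (fun b => V b i) := by
      rw [hu, hw, Matrix.mulVec_mulVec, Matrix.mulVec_mulVec]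
      have : Hm * (Kp * hmu) * Hp = Hm * Kp * Hmᵀ := by
        simp only [Matrix.mul_assoc]
        rw [hmuHp]
      rw [this]
      exact hκv i
    have hHmd : Hm *ᵥ d = 0 := by
      rw [hd, Matrix.mulVec_sub, Matrix.mulVec_smul, hHmu', hHmw, sub_self]
    have hg2 : ∫ x, (∑ a, d a * k (Z a) x) * (∑ b, d b * k (Z b) x) ∂μ = 0 := by
      rw [aux_key_int hint hhmu', ← hHm, ← Matrix.mulVec_mulVec, Matrix.dotProduct_mulVec,
        Matrix.vecMul_transpose, hHmd, zero_dotProduct]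
    have hgint : Integrable (fun x => (∑ a, d a * k (Z a) x) * (∑ a, d a * k (Z a) x)) μ :=
      aux_int_mul (aux_memlp hL2 d) (aux_memlp hL2 d)
    have hg0 : ∀ᵐ x ∂μ, (∑ a, d a * k (Z a) x) = 0 := by
      have h0 := (integral_eq_zero_iff_of_nonneg_ae
        (Filter.Eventually.of_forall fun x => mul_self_nonneg (∑ a, d a * k (Z a) x)) hgint).mp hg2
      filter_upwards [h0] with x hx
      exact mul_self_eq_zero.mp hx
    have hxint : ∀ x : 𝒳, (∫ y, kZ x y * f i y ∂μ) = ∑ a, u a * k (Z a) x := by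
      intro x
      have hC : ∀ y, kZ x y * f i y
          = (∑ b, (∑ a, k x (Z a) * Kp a b) * k (Z b) y) * (∑ c, w c * k (Z c) y) := by
        intro y
        rw [hkZ, hf]
        congr 1
        rw [Finset.sum_comm]
        exact Finset.sum_congr rfl fun b _ => by rw [Finset.sum_mul]
      calc ∫ y, kZ x y * f i y ∂μ
          = ∫ y, (∑ b, (∑ a, k x (Z a) * Kp a b) * k (Z b) y) * (∑ c, w c * k (Z c) y) ∂μ :=
            integral_congr_ae (Filter.Eventually.of_forall hC)
        _ = (fun b => ∑ a, k x (Z a) * Kp a b) ⬝ᵥ hmu *ᵥ w := aux_key_int hint hhmu' _ _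
        _ = ((fun a => k x (Z a)) ᵥ* Kp) ⬝ᵥ hmu *ᵥ w := by
            congr 1
        _ = (fun a => k x (Z a)) ⬝ᵥ (Kp *ᵥ (hmu *ᵥ w)) := (Matrix.dotProduct_mulVec _ _ _).symm
        _ = (fun a => k x (Z a)) ⬝ᵥ u := by rw [Matrix.mulVec_mulVec, ← hu]
        _ = ∑ a, u a * k (Z a) x := by
            simp only [dotProduct]
            exact Finset.sum_congr rfl fun a _ => by rw [ksymm x (Z a)]; ring
    filter_upwards [hg0] with x hx
    rw [hxint x, hf]
    have hsum : ∑ a, u a * k (Z a) x - κ i * ∑ a, (Hp *ᵥ (fun b => V b i)) a * k (Z a) x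
        = ∑ a, d a * k (Z a) x := by
      rw [Finset.mul_sum, ← Finset.sum_sub_distrib]
      refine Finset.sum_congr rfl fun a _ => ?_
      have : d a = u a - κ i * w a := by simp [hd]
      rw [this, ← hw]
      ring
    rw [hx] at hsum
    linarith [hsum]
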